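/- Let A be a pca and ∼ an equivalence relation on A such that A is ∼-extensional, i.e., for all f, g ∈ A, if f·a ≃ g·a for every a ∈ A then f ∼ g. Then ∼ is precomplete: for every b ∈ A there exists a total f ∈ A such that for all a ∈ A, if b·a is defined then f·a ∼ b·a. -/
import Mathlib


/-- A partial combinatory algebra: a partial binary application together with
combinators `k` and `s` satisfying the usual laws. -/
structure PCA (A : Type) where
  app : A → A → Part A
  k : A
  s : A
  k_def : ∀ a : A, (app k a).Dom
  k_eq : ∀ a b : A, (app k a).bind (fun u => app u b) = Part.some a
  s_def : ∀ a : A, (app s a).Dom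
  s_def2 : ∀ a b : A, ((app s a).bind fun u => app u b).Dom
  s_eq : ∀ a b c : A,
    (((app s a).bind fun u => app u b).bind fun u => app u c) =
      (app a c).bind fun u => (app b c).bind fun v => app u v

/-- Extension of a relation on `A` to partial values: either both are
undefined, or both are defined with related values. -/
def PartRel {A : Type} (r : A → A → Prop) (x y : Part A) : Prop :=
  (¬ x.Dom ∧ ¬ y.Dom) ∨ (∃ a ∈ x, ∃ b ∈ y, r a b)

namespace PCA
variable {A : Type} (P : PCA A)

def ka (x : A) : A := (P.app P.k x).get (P.k_def x)
def s1 (x : A) : A := (P.app P.s x).get (P.s_def x)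
def s2 (x y : A) : A := ((P.app P.s x).bind fun u => P.app u y).get (P.s_def2 x y)

lemma app_k (x : A) : P.app P.k x = Part.some (P.ka x) := (Part.some_get _).symm
lemma app_s (x : A) : P.app P.s x = Part.some (P.s1 x) := (Part.some_get _).symm

lemma app_ka (x c : A) : P.app (P.ka x) c = Part.some x := by
  have h := P.k_eq x c
  rwa [P.app_k, Part.bind_some] at h

lemma bind_s2 (x y : A) :
    ((P.app P.s x).bind fun u => P.app u y) = Part.some (P.s2 x y) :=
  (Part.some_get _).symm

lemma app_s1 (x y : A) : P.app (P.s1 x) y = Part.some (P.s2 x y) := by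
  have h := P.bind_s2 x y
  rwa [P.app_s, Part.bind_some] at h

lemma app_s2 (x y c : A) :
    P.app (P.s2 x y) c = (P.app x c).bind fun u => (P.app y c).bind fun v => P.app u v := by
  have h := P.s_eq x y c
  rwa [P.bind_s2, Part.bind_some] at h

/-- The identity combinator `s k k`. -/
def i : A := P.s2 P.k P.k

lemma app_i (c : A) : P.app P.i c = Part.some c := by
  simp [i, P.app_s2, P.app_k, Part.bind_some, P.app_ka]

/-- `E b a` behaves like `b·a` under application. -/
def E (b a : A) : A := P.s2 (P.s2 (P.ka b) (P.ka a)) P.i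

lemma app_E (b a c : A) :
    P.app (P.E b a) c = (P.app b a).bind fun u => P.app u c := by
  simp [E, P.app_s2, P.app_ka, Part.bind_some, P.app_i]

/-- Total element computing `E b a` from `a`. -/
def F (b : A) : A := P.s2 (P.s2 (P.ka P.s) (P.s2 (P.ka (P.s1 (P.ka b))) P.k)) (P.ka P.i)

lemma app_F (b a : A) : P.app (P.F b) a = Part.some (P.E b a) := by
  simp [F, E, P.app_s2, P.app_ka, Part.bind_some, P.app_k, P.app_s, P.app_s1]

end PCA

/-- If `A` is `∼`-extensional then `∼` is precomplete. -/
theorem extensional_precomplete {A : Type} (P : PCA A) (r : A → A → Prop)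
    (hr : Equivalence r)
    (hext : ∀ f g : A, (∀ a : A, P.app f a = P.app g a) → r f g) :
    ∀ b : A, ∃ f : A, (∀ a : A, (P.app f a).Dom) ∧
      ∀ a : A, (P.app b a).Dom →
        ∃ u ∈ P.app f a, ∃ v ∈ P.app b a, r u v := by

  intro b
  refine ⟨P.F b, fun a => by rw [P.app_F]; trivial, fun a h => ?_⟩
  set w := (P.app b a).get h with hw
  have hba : P.app b a = Part.some w := (Part.some_get _).symm
  refine ⟨P.E b a, by rw [P.app_F]; exact Part.mem_some _,
    w, Part.get_mem h, hext _ _ fun c => ?_⟩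
  rw [P.app_E, hba, Part.bind_some]
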